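/- Let G be an Eulerian digraph in which every node has in-degree 2 and out-degree 2, let P be the 0/1-circulation polytope of G, let 0 ∈ P be the zero flow and 1 ∈ P the full flow. Then the minimum of Σ_{i=1}^r ‖λ_i g_i‖_∞ over all circuit walks ((g_1,λ_1),…,(g_r,λ_r)) from 0 to 1 equals 2 if and only if G decomposes into two simple Hamiltonian dicycles. -/

import Mathlib

open Matrix

/-- `g` is a circuit of the polyhedron `{x : A x = b, B x ≤ d}` with respect to the
description `(A, B)`: a nonzero element of `ker A` with coprime integral components such that
`B g` is support-minimal among `{B x : x ∈ ker A, x ≠ 0}`. -/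
def IsCircuit {mA mB n : Type*} [Fintype n]
    (A : Matrix mA n ℝ) (B : Matrix mB n ℝ) (g : n → ℝ) : Prop :=
  A.mulVec g = 0 ∧ g ≠ 0 ∧
  (∃ z : n → ℤ, (∀ i, (z i : ℝ) = g i) ∧ Finset.univ.gcd z = 1) ∧
  ∀ x : n → ℝ, A.mulVec x = 0 → x ≠ 0 →
    ¬ (Function.support (B.mulVec x) ⊂ Function.support (B.mulVec g))

/-- Membership in the polyhedron `{x : A x = b, B x ≤ d}`. -/
def InPoly {mA mB n : Type*} [Fintype n] (A : Matrix mA n ℝ) (b : mA → ℝ)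
    (B : Matrix mB n ℝ) (d : mB → ℝ) (x : n → ℝ) : Prop :=
  A.mulVec x = b ∧ B.mulVec x ≤ d

/-- `((g 0, lam 0), …, (g (r-1), lam (r-1)))` is a (maximal) circuit walk from `x` to `y`
in the polyhedron `{x : A x = b, B x ≤ d}`. -/
def IsCircuitWalk {mA mB n : Type*} [Fintype n]
    (A : Matrix mA n ℝ) (b : mA → ℝ) (B : Matrix mB n ℝ) (d : mB → ℝ)
    (x y : n → ℝ) (r : ℕ) (g : Fin r → n → ℝ) (lam : Fin r → ℝ) : Prop :=
  (∀ i, IsCircuit A B (g i)) ∧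
  (∀ i, 0 < lam i) ∧
  (∀ k : Fin r, InPoly A b B d (x + ∑ i ∈ Finset.univ.filter (fun i => i ≤ k), lam i • g i)) ∧
  (x + ∑ i, lam i • g i = y) ∧
  (∀ k : Fin r, ∀ mu : ℝ, lam k < mu →
    ¬ InPoly A b B d ((x + ∑ i ∈ Finset.univ.filter (fun i => i < k), lam i • g i) + mu • g k))

/-- `u` and `u'` are sign-compatible with respect to `B`. -/
def SignCompat {mB n : Type*} [Fintype n] (B : Matrix mB n ℝ) (u u' : n → ℝ) : Prop :=
  ∀ i, 0 ≤ B.mulVec u i * B.mulVec u' i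

/-- Sign-compatible circuit decomposition of the vector `u` with respect to `(A, B)`. -/
def IsSCDecomp {mA mB n : Type*} [Fintype n]
    (A : Matrix mA n ℝ) (B : Matrix mB n ℝ) (u : n → ℝ)
    (r : ℕ) (g : Fin r → n → ℝ) (lam : Fin r → ℝ) : Prop :=
  (∀ i, IsCircuit A B (g i)) ∧ (∀ i, 0 < lam i) ∧ (∑ i, lam i • g i = u) ∧
  ∀ i j, SignCompat B (g i) (g j)

/-- A loopless digraph with node type `N` and arc type `α`. -/
structure Digraph' (N α : Type*) where
  src : α → N
  dst : α → N
  loopless : ∀ a, src a ≠ dst a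

/-- The node-arc incidence matrix of a digraph. -/
def incMat {N α : Type*} [DecidableEq N] (G : Digraph' N α) : Matrix N α ℝ :=
  Matrix.of fun v a => if G.src a = v then 1 else if G.dst a = v then -1 else 0

/-- The inequality system `x ≤ 1`-style box constraints: rows of the identity followed by
rows of the negative identity. -/
def boxB (α : Type*) [DecidableEq α] : Matrix (α ⊕ α) α ℝ :=
  Matrix.fromRows 1 (-1)

/-- Right-hand side for the box constraints `x ≤ 1`, `-x ≤ 0` of the 0/1-circulation polytope. -/
def boxd (α : Type*) : α ⊕ α → ℝ := Sum.elim (fun _ => 1) (fun _ => 0)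

/-- In-degree of a node. -/
def inDeg {N α : Type*} [Fintype α] [DecidableEq N] (G : Digraph' N α) (v : N) : ℕ :=
  (Finset.univ.filter fun a => G.dst a = v).card

/-- Out-degree of a node. -/
def outDeg {N α : Type*} [Fintype α] [DecidableEq N] (G : Digraph' N α) (v : N) : ℕ :=
  (Finset.univ.filter fun a => G.src a = v).card

/-- `S` is the arc set of a simple dicycle of `G` (a directed cycle with no repeated nodes). -/
def IsSimpleDicycle {N α : Type*} (G : Digraph' N α) (S : Set α) : Prop :=
  ∃ (k : ℕ) (e : Fin (k+1) → α) (v : Fin (k+1) → N),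
    Function.Injective e ∧ Function.Injective v ∧ S = Set.range e ∧
    ∀ i, G.src (e i) = v i ∧ G.dst (e i) = v (i + 1)

/-- `S` is the arc set of a simple Hamiltonian dicycle of `G`. -/
def IsHamiltonianDicycle {N α : Type*} (G : Digraph' N α) (S : Set α) : Prop :=
  ∃ (k : ℕ) (e : Fin (k+1) → α) (v : Fin (k+1) → N),
    Function.Injective e ∧ Function.Bijective v ∧ S = Set.range e ∧
    ∀ i, G.src (e i) = v i ∧ G.dst (e i) = v (i + 1)

/-- `G` decomposes into two simple Hamiltonian dicycles. -/
def DecompTwoHamiltonian {N α : Type*} (G : Digraph' N α) : Prop :=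
  ∃ S₁ S₂ : Set α, IsHamiltonianDicycle G S₁ ∧ IsHamiltonianDicycle G S₂ ∧
    Disjoint S₁ S₂ ∧ S₁ ∪ S₂ = Set.univ
section Aux
variable {N α : Type*} [Fintype N] [Fintype α] [DecidableEq N] [DecidableEq α]

lemma boxB_mulVec (y : α → ℝ) : (boxB α).mulVec y = Sum.elim y (-y) := by
  unfold boxB
  rw [Matrix.fromRows_mulVec, Matrix.one_mulVec, Matrix.neg_mulVec, Matrix.one_mulVec]

lemma incMat_apply (G : Digraph' N α) (v : N) (a : α) :
    incMat G v a = if G.src a = v then 1 else if G.dst a = v then -1 else 0 := rfl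

lemma incMat_mulVec_apply (G : Digraph' N α) (g : α → ℝ) (w : N) :
    (incMat G).mulVec g w =
      (∑ a ∈ Finset.univ.filter fun a => G.src a = w, g a)
        - ∑ a ∈ Finset.univ.filter fun a => G.dst a = w, g a := by
  have h : ∀ a, incMat G w a * g a =
      (if G.src a = w then g a else 0) - (if G.dst a = w then g a else 0) := by
    intro a
    rw [incMat_apply]
    by_cases h1 : G.src a = w
    · have h2 : ¬ G.dst a = w := fun h => G.loopless a (h1.trans h.symm)
      simp [h1, h2]
    · by_cases h2 : G.dst a = w <;> simp [h1, h2]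
  simp only [Matrix.mulVec, dotProduct, h, Finset.sum_sub_distrib]
  rw [Finset.sum_filter, Finset.sum_filter]

lemma mulVec_eq_sum_range {G : Digraph' N α} {k : ℕ} {e : Fin (k+1) → α}
    (he : Function.Injective e) {x : α → ℝ} (hx : ∀ b, b ∉ Set.range e → x b = 0) (w : N) :
    (incMat G).mulVec x w = ∑ i, incMat G w (e i) * x (e i) := by
  have h1 : (incMat G).mulVec x w = ∑ a ∈ Finset.univ.image e, incMat G w a * x a := by
    rw [Matrix.mulVec, dotProduct]
    refine (Finset.sum_subset (Finset.subset_univ _) ?_).symm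
    intro a _ ha
    have : a ∉ Set.range e := by
      intro ⟨i, hi⟩; exact ha (Finset.mem_image.mpr ⟨i, Finset.mem_univ _, hi⟩)
    rw [hx a this, mul_zero]
  rw [h1, Finset.sum_image (fun i _ j _ h => he h)]

lemma incMat_cycle_apply (G : Digraph' N α) {k : ℕ} {e : Fin (k+1) → α} {v : Fin (k+1) → N}
    {i : Fin (k+1)} (h1 : G.src (e i) = v i) (h2 : G.dst (e i) = v (i+1)) (w : N) :
    incMat G w (e i) = (if v i = w then 1 else 0) - (if v (i+1) = w then 1 else 0) := by
  have hne : v i ≠ v (i+1) := h1 ▸ h2 ▸ G.loopless (e i)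
  rw [incMat_apply, h1, h2]
  by_cases hw1 : v i = w <;> by_cases hw2 : v (i+1) = w <;> simp_all

lemma sum_shift {k : ℕ} (f : Fin (k+1) → ℝ) : ∑ i : Fin (k+1), f (i+1) = ∑ i, f i :=
  Fintype.sum_equiv (Equiv.addRight 1) _ _ (fun _ => rfl)

end Aux
section Aux2
variable {N α : Type*} [Fintype N] [Fintype α] [DecidableEq N] [DecidableEq α]

/-- Residual source of an arc carrying nonzero flow. -/
noncomputable def rsrc (G : Digraph' N α) (g : α → ℝ) (b : α) : N := if 0 < g b then G.src b else G.dst b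

/-- Residual destination of an arc carrying nonzero flow. -/
noncomputable def rdst (G : Digraph' N α) (g : α → ℝ) (b : α) : N := if 0 < g b then G.dst b else G.src b

/-- `(e, v)` is a residual cycle for `g`. -/
def ResidCycle (G : Digraph' N α) (g : α → ℝ) {k : ℕ}
    (e : Fin (k+1) → α) (v : Fin (k+1) → N) : Prop :=
  ∀ i, (0 < g (e i) ∧ G.src (e i) = v i ∧ G.dst (e i) = v (i+1)) ∨
       (g (e i) < 0 ∧ G.src (e i) = v (i+1) ∧ G.dst (e i) = v i)

lemma exists_resid_out (G : Digraph' N α) (g : α → ℝ)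
    (hcirc : (incMat G).mulVec g = 0) (a : α) (ha : g a ≠ 0) :
    ∃ b, g b ≠ 0 ∧ rsrc G g b = rdst G g a := by
  by_contra hcon
  push_neg at hcon
  set w := rdst G g a with hw
  have h0 : (∑ b ∈ Finset.univ.filter fun b => G.src b = w, g b)
      = ∑ b ∈ Finset.univ.filter fun b => G.dst b = w, g b := by
    have := congrFun hcirc w
    rw [incMat_mulVec_apply] at this
    simpa [sub_eq_zero] using this
  have hsrc : ∀ b, G.src b = w → g b ≤ 0 := by
    intro b hb
    by_contra hgb
    push_neg at hgb
    exact hcon b (ne_of_gt hgb) (by simp [rsrc, hgb, hb])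
  have hdst : ∀ b, G.dst b = w → 0 ≤ g b := by
    intro b hb
    by_contra hgb
    push_neg at hgb
    exact hcon b (ne_of_lt hgb) (by simp [rsrc, not_lt.mpr hgb.le, hb])
  have hle : (∑ b ∈ Finset.univ.filter fun b => G.src b = w, g b) ≤ 0 :=
    Finset.sum_nonpos (fun b hb => hsrc b (Finset.mem_filter.mp hb).2)
  have hge : (0:ℝ) ≤ ∑ b ∈ Finset.univ.filter fun b => G.dst b = w, g b :=
    Finset.sum_nonneg (fun b hb => hdst b (Finset.mem_filter.mp hb).2)
  have hz1 : (∑ b ∈ Finset.univ.filter fun b => G.src b = w, g b) = 0 :=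
    le_antisymm hle (h0 ▸ hge)
  have hz2 : (∑ b ∈ Finset.univ.filter fun b => G.dst b = w, g b) = 0 := h0 ▸ hz1
  rcases ha.lt_or_gt with hlt | hgt
  · -- g a < 0 : rdst a = src a = w, and the src-sum has the negative term g a
    have hsw : G.src a = w := by simp [hw, rdst, not_lt.mpr hlt.le]
    have : g a = 0 := by
      have := (Finset.sum_eq_zero_iff_of_nonpos
        (fun b hb => hsrc b (Finset.mem_filter.mp hb).2)).mp hz1 a
        (Finset.mem_filter.mpr ⟨Finset.mem_univ _, hsw⟩)
      exact this
    exact ha this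
  · have hdw : G.dst a = w := by simp [hw, rdst, hgt]
    have : g a = 0 := (Finset.sum_eq_zero_iff_of_nonneg
        (fun b hb => hdst b (Finset.mem_filter.mp hb).2)).mp hz2 a
        (Finset.mem_filter.mpr ⟨Finset.mem_univ _, hdw⟩)
    exact ha this

lemma exists_resid_cycle (G : Digraph' N α) (g : α → ℝ)
    (hcirc : (incMat G).mulVec g = 0) (hne : g ≠ 0) :
    ∃ (k : ℕ) (e : Fin (k+1) → α) (v : Fin (k+1) → N),
      Function.Injective e ∧ Function.Injective v ∧ ResidCycle G g e v := by
  classical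
  obtain ⟨a₀, ha₀⟩ := Function.ne_iff.mp hne
  have step : ∀ t : {a : α // g a ≠ 0}, ∃ t' : {a : α // g a ≠ 0},
      rsrc G g t'.1 = rdst G g t.1 := by
    intro t
    obtain ⟨b, hb, hb2⟩ := exists_resid_out G g hcirc t.1 t.2
    exact ⟨⟨b, hb⟩, hb2⟩
  choose F hF using step
  set t : ℕ → {a : α // g a ≠ 0} := fun n => F^[n] ⟨a₀, ha₀⟩ with ht
  have hstep : ∀ n, rsrc G g (t (n+1)).1 = rdst G g (t n).1 := by
    intro n
    have : t (n+1) = F (t n) := Function.iterate_succ_apply' F n _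
    rw [this]; exact hF _
  set u : ℕ → N := fun n => rsrc G g (t n).1 with hu'
  have hu : ∀ n, rdst G g (t n).1 = u (n+1) := fun n => (hstep n).symm
  have hex : ∃ j, ∃ i, i < j ∧ u i = u j := by
    have hni : ¬ Function.Injective (fun i : Fin (Fintype.card N + 1) => u i.val) := by
      intro hinj
      have := Fintype.card_le_of_injective _ hinj
      simp at this
    rw [Function.not_injective_iff] at hni
    obtain ⟨i, j, hij, hne'⟩ := hni
    rcases lt_or_gt_of_ne hne' with h | h
    · exact ⟨j.val, i.val, h, hij⟩
    · exact ⟨i.val, j.val, h, hij.symm⟩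
  set j₀ := Nat.find hex with hj₀
  obtain ⟨i₀, hi₀lt, hi₀eq⟩ := Nat.find_spec hex
  have hmin : ∀ m m', m < m' → m' < j₀ → u m ≠ u m' := by
    intro m m' h1 h2 heq
    exact Nat.find_min hex h2 ⟨m, h1, heq⟩
  obtain ⟨L, hL⟩ : ∃ L, i₀ + L + 1 = j₀ := ⟨j₀ - i₀ - 1, by omega⟩
  refine ⟨L, fun m => (t (i₀ + m.val)).1, fun m => u (i₀ + m.val), ?_, ?_, ?_⟩
  · intro m m' h
    have hh : ((t (i₀ + m.val)).1) = (t (i₀ + m'.val)).1 := h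
    have : u (i₀ + m.val) = u (i₀ + m'.val) := by
      show rsrc G g (t (i₀ + m.val)).1 = rsrc G g (t (i₀ + m'.val)).1
      rw [hh]
    by_contra hne2
    have hvne : m.val ≠ m'.val := fun hh => hne2 (Fin.ext hh)
    rcases Nat.lt_or_ge m.val m'.val with hlt | hge
    · exact hmin _ _ (by omega) (by have := m'.isLt; omega) this
    · exact hmin _ _ (by omega) (by have := m.isLt; omega) this.symm
  · intro m m' h
    have h' : u (i₀ + m.val) = u (i₀ + m'.val) := h
    clear h; rename' h' => h
    by_contra hne2
    have hvne : m.val ≠ m'.val := fun hh => hne2 (Fin.ext hh)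
    rcases Nat.lt_or_ge m.val m'.val with hlt | hge
    · exact hmin _ _ (by omega) (by have := m'.isLt; omega) h
    · exact hmin _ _ (by omega) (by have := m.isLt; omega) h.symm
  · intro m
    beta_reduce
    have h1 : rsrc G g (t (i₀ + m.val)).1 = u (i₀ + m.val) := rfl
    have h2 : rdst G g (t (i₀ + m.val)).1 = u (i₀ + m.val + 1) := hu _
    have h3 : u (i₀ + m.val + 1) = u (i₀ + (m+1).val) := by
      by_cases hm : m.val < L
      · have : (m+1).val = m.val + 1 := by
          rw [Fin.val_add_one]
          have : m ≠ Fin.last L := by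
            intro hh; rw [hh] at hm; simp at hm
          simp [this]
        rw [this]; ring_nf
      · have hmL : m.val = L := by have := m.isLt; omega
        have hlast : m = Fin.last L := Fin.ext (by simpa using hmL)
        have : (m+1).val = 0 := by
          rw [hlast]
          simp [Fin.last_add_one]
        rw [this, hmL, hL]
        simpa using hi₀eq.symm
    rw [h3] at h2
    have hg := (t (i₀ + m.val)).2
    rcases hg.lt_or_gt with hlt | hgt
    · right
      refine ⟨hlt, ?_, ?_⟩
      · rw [← h2]; simp [rdst, not_lt.mpr hlt.le]
      · rw [← h1]; simp [rsrc, not_lt.mpr hlt.le]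
    · left
      refine ⟨hgt, ?_, ?_⟩
      · rw [← h1]; simp [rsrc, hgt]
      · rw [← h2]; simp [rdst, hgt]

end Aux2
section Aux3
variable {N α : Type*} [Fintype N] [Fintype α] [DecidableEq N] [DecidableEq α]

lemma incMat_mul_resid {G : Digraph' N α} {g : α → ℝ} {k : ℕ} {e : Fin (k+1) → α}
    {v : Fin (k+1) → N} {i : Fin (k+1)}
    (h : (0 < g (e i) ∧ G.src (e i) = v i ∧ G.dst (e i) = v (i+1)) ∨
         (g (e i) < 0 ∧ G.src (e i) = v (i+1) ∧ G.dst (e i) = v i)) (w : N) :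
    incMat G w (e i) * g (e i) =
      |g (e i)| * ((if v i = w then 1 else 0) - (if v (i+1) = w then 1 else 0)) := by
  rcases h with ⟨hpos, h1, h2⟩ | ⟨hneg, h1, h2⟩
  · rw [incMat_cycle_apply G h1 h2, abs_of_pos hpos]; ring
  · have hne : v (i+1) ≠ v i := h1 ▸ h2 ▸ G.loopless (e i)
    have : incMat G w (e i) = (if v (i+1) = w then 1 else 0) - (if v i = w then 1 else 0) := by
      rw [incMat_apply, h1, h2]
      by_cases hw1 : v (i+1) = w <;> by_cases hw2 : v i = w <;> simp_all
    rw [this, abs_of_neg hneg]; ring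

lemma mulVec_resid {G : Digraph' N α} {g : α → ℝ} {k : ℕ} {e : Fin (k+1) → α}
    {v : Fin (k+1) → N} (he : Function.Injective e)
    (hx : ∀ b, b ∉ Set.range e → g b = 0) (hres : ResidCycle G g e v) (w : N) :
    (incMat G).mulVec g w =
      (∑ i, if v i = w then |g (e i)| else 0) - ∑ i, if v (i+1) = w then |g (e i)| else 0 := by
  rw [mulVec_eq_sum_range he hx]
  rw [← Finset.sum_sub_distrib]
  refine Finset.sum_congr rfl fun i _ => ?_
  rw [incMat_mul_resid (hres i)]
  by_cases h1 : v i = w <;> by_cases h2 : v (i+1) = w <;> simp [h1, h2]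

/-- A residual cycle with constant absolute flow value is a circulation. -/
lemma resid_circulation {G : Digraph' N α} {g : α → ℝ} {k : ℕ} {e : Fin (k+1) → α}
    {v : Fin (k+1) → N} (he : Function.Injective e)
    (hx : ∀ b, b ∉ Set.range e → g b = 0) (hres : ResidCycle G g e v)
    (habs : ∀ i j, |g (e i)| = |g (e j)|) :
    (incMat G).mulVec g = 0 := by
  funext w
  rw [mulVec_resid he hx hres w]
  have h1 : ∀ i : Fin (k+1), (if v i = w then |g (e i)| else 0)
      = (if v i = w then |g (e 0)| else 0) := by
    intro i; by_cases h : v i = w <;> simp [h, habs i 0]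
  have h2 : ∀ i : Fin (k+1), (if v (i+1) = w then |g (e i)| else 0)
      = (if v (i+1) = w then |g (e 0)| else 0) := by
    intro i; by_cases h : v (i+1) = w <;> simp [h, habs i 0]
  simp only [h1, h2]
  rw [sum_shift (fun j => if v j = w then |g (e 0)| else 0)]
  simp

open Fin.NatCast in
/-- Conversely, a support-exact residual cycle structure for a circulation forces
constant absolute values. -/
lemma resid_const {G : Digraph' N α} {g : α → ℝ} {k : ℕ} {e : Fin (k+1) → α}
    {v : Fin (k+1) → N} (he : Function.Injective e) (hv : Function.Injective v)
    (hx : ∀ b, b ∉ Set.range e → g b = 0) (hres : ResidCycle G g e v)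
    (hcirc : (incMat G).mulVec g = 0) :
    ∀ i j, |g (e i)| = |g (e j)| := by
  have key : ∀ m : Fin (k+1), |g (e (m+1))| = |g (e m)| := by
    intro m
    have h0 := congrFun hcirc (v (m+1))
    rw [mulVec_resid he hx hres (v (m+1))] at h0
    have hA : (∑ i, if v i = v (m+1) then |g (e i)| else 0) = |g (e (m+1))| := by
      rw [Finset.sum_eq_single (m+1)]
      · simp
      · intro i _ hne
        have : v i ≠ v (m+1) := fun h => hne (hv h)
        simp [this]
      · simp
    have hB : (∑ i, if v (i+1) = v (m+1) then |g (e i)| else 0) = |g (e m)| := by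
      rw [Finset.sum_eq_single m]
      · simp
      · intro i _ hne
        have : v (i+1) ≠ v (m+1) := fun h => hne (by
          have := hv h
          exact add_right_cancel this)
        simp [this]
      · simp
    rw [hA, hB] at h0
    rw [Pi.zero_apply] at h0
    linarith
  have key0 : ∀ i : Fin (k+1), |g (e i)| = |g (e 0)| := by
    have hnat : ∀ n : ℕ, |g (e (n : Fin (k+1)))| = |g (e 0)| := by
      intro n
      induction n with
      | zero => simp
      | succ n ih =>
        have : ((n+1 : ℕ) : Fin (k+1)) = (n : Fin (k+1)) + 1 := by
          push_cast; ring
        rw [this, key, ih]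
    intro i
    have : i = ((i.val : ℕ) : Fin (k+1)) := (Fin.cast_val_eq_self i).symm
    rw [this]; exact hnat i.val
  intro i j; rw [key0 i, key0 j]

lemma support_boxB_ssubset {x g : α → ℝ}
    (hsub : ∀ b, x b ≠ 0 → g b ≠ 0) (b₀ : α) (hb₀ : g b₀ ≠ 0) (hxb₀ : x b₀ = 0) :
    Function.support ((boxB α).mulVec x) ⊂ Function.support ((boxB α).mulVec g) := by
  rw [boxB_mulVec, boxB_mulVec]
  constructor
  · intro i hi
    rcases i with a | a
    · simp only [Function.mem_support, Sum.elim_inl] at hi ⊢; exact hsub a hi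
    · simp only [Function.mem_support, Sum.elim_inr, Pi.neg_apply, neg_ne_zero] at hi ⊢
      exact hsub a hi
  · intro hsup
    have hmem : (Sum.inl b₀ : α ⊕ α) ∈ Function.support (Sum.elim g (-g)) := by
      simp [Function.mem_support, hb₀]
    have := hsup hmem
    simp only [Function.mem_support, Sum.elim_inl] at this
    exact this hxb₀

end Aux3
section Aux4
variable {N α : Type*} [Fintype N] [Fintype α] [DecidableEq N] [DecidableEq α]

lemma circuit_structure (G : Digraph' N α) (g : α → ℝ)
    (hc : IsCircuit (incMat G) (boxB α) g) :
    ∃ (k : ℕ) (e : Fin (k+1) → α) (v : Fin (k+1) → N),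
      Function.Injective e ∧ Function.Injective v ∧
      (∀ b, b ∉ Set.range e → g b = 0) ∧
      ∀ i, (g (e i) = 1 ∧ G.src (e i) = v i ∧ G.dst (e i) = v (i+1)) ∨
           (g (e i) = -1 ∧ G.src (e i) = v (i+1) ∧ G.dst (e i) = v i) := by
  classical
  obtain ⟨hcirc, hne, hint, hmin⟩ := hc
  obtain ⟨k, e, v, he, hv, hres⟩ := exists_resid_cycle G g hcirc hne
  set x : α → ℝ := fun b => if b ∈ Set.range e then (if 0 < g b then 1 else -1) else 0
    with hxdef
  have hxsupp : ∀ b, b ∉ Set.range e → x b = 0 := fun b hb => by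
    simp only [hxdef]; rw [if_neg hb]
  have hgne : ∀ i, g (e i) ≠ 0 := fun i => by
    rcases hres i with ⟨h,_,_⟩|⟨h,_,_⟩
    exacts [ne_of_gt h, ne_of_lt h]
  have hxe : ∀ i, x (e i) = if 0 < g (e i) then 1 else -1 := fun i => by
    simp [hxdef, Set.mem_range_self]
  have hxres : ResidCycle G x e v := by
    intro i
    rcases hres i with ⟨h,h1,h2⟩|⟨h,h1,h2⟩
    · left; refine ⟨?_, h1, h2⟩; rw [hxe i]; simp [h]
    · right; refine ⟨?_, h1, h2⟩; rw [hxe i]; simp [not_lt.mpr h.le]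
  have hxabs : ∀ i j, |x (e i)| = |x (e j)| := by
    intro i j; rw [hxe i, hxe j]; split_ifs <;> simp
  have hxcirc := resid_circulation he hxsupp hxres hxabs
  have hxne : x ≠ 0 := by
    intro h0
    have h1 : x (e 0) = 0 := by rw [h0]; rfl
    rw [hxe 0] at h1
    split_ifs at h1 <;> norm_num at h1
  have hgsupp : ∀ b, b ∉ Set.range e → g b = 0 := by
    by_contra hcon
    push_neg at hcon
    obtain ⟨b₀, hb₀r, hb₀⟩ := hcon
    refine hmin x hxcirc hxne (support_boxB_ssubset ?_ b₀ hb₀ (hxsupp b₀ hb₀r))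
    intro b hb
    by_cases hbr : b ∈ Set.range e
    · obtain ⟨i, rfl⟩ := hbr; exact hgne i
    · exact absurd (hxsupp b hbr) hb
  have habs := resid_const he hv hgsupp hres hcirc
  obtain ⟨z, hz, hgcd⟩ := hint
  set c := z (e 0) with hcdef
  have hc0 : (c : ℝ) = g (e 0) := hz (e 0)
  have hdvd : ∀ b, c ∣ z b := by
    intro b
    by_cases hbr : b ∈ Set.range e
    · obtain ⟨i, rfl⟩ := hbr
      rcases abs_eq_abs.mp (habs i 0) with h | h
      · have hzz : (z (e i) : ℝ) = (c : ℝ) := by rw [hz, h, hc0]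
        have : z (e i) = c := by exact_mod_cast hzz
        exact this ▸ dvd_refl c
      · have hzz : (z (e i) : ℝ) = -(c : ℝ) := by rw [hz, h, hc0]
        have : z (e i) = -c := by exact_mod_cast hzz
        rw [this]; exact dvd_neg.mpr (dvd_refl c)
    · have h1 : (z b : ℝ) = 0 := by rw [hz]; exact hgsupp b hbr
      have : z b = 0 := by exact_mod_cast h1
      simp [this]
  have hcd : c ∣ 1 := hgcd ▸ Finset.dvd_gcd (fun i _ => hdvd i)
  have hcu : c = 1 ∨ c = -1 := Int.isUnit_iff.mp (isUnit_of_dvd_one hcd)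
  have habs1 : ∀ i, |g (e i)| = 1 := by
    intro i
    rw [habs i 0, ← hc0]
    rcases hcu with h|h <;> rw [h] <;> norm_num
  refine ⟨k, e, v, he, hv, hgsupp, ?_⟩
  intro i
  rcases hres i with ⟨h,h1,h2⟩|⟨h,h1,h2⟩
  · left
    refine ⟨?_, h1, h2⟩
    have := habs1 i; rw [abs_of_pos h] at this; exact this
  · right
    refine ⟨?_, h1, h2⟩
    have := habs1 i; rw [abs_of_neg h] at this; linarith

end Aux4
section Aux5
variable {N α : Type*} [Fintype N] [Fintype α] [DecidableEq N] [DecidableEq α]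

open Fin.NatCast in
lemma fin_cycle_const {k : ℕ} (f : Fin (k+1) → ℝ) (h : ∀ i, f (i+1) = f i) :
    ∀ i j, f i = f j := by
  have h0 : ∀ i, f i = f 0 := by
    have hnat : ∀ n : ℕ, f (n : Fin (k+1)) = f 0 := by
      intro n
      induction n with
      | zero => simp
      | succ n ih =>
        have hcast : ((n+1 : ℕ) : Fin (k+1)) = (n : Fin (k+1)) + 1 := by push_cast; ring
        rw [hcast, h, ih]
    intro i
    have : i = ((i.val : ℕ) : Fin (k+1)) := (Fin.cast_val_eq_self i).symm
    rw [this]; exact hnat i.val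
  intro i j; rw [h0 i, h0 j]

lemma inPoly_iff (G : Digraph' N α) (x : α → ℝ) :
    InPoly (incMat G) 0 (boxB α) (boxd α) x ↔
      ((incMat G).mulVec x = 0 ∧ ∀ a, 0 ≤ x a ∧ x a ≤ 1) := by
  unfold InPoly
  rw [boxB_mulVec]
  constructor
  · rintro ⟨h1, h2⟩
    refine ⟨h1, fun a => ⟨?_, ?_⟩⟩
    · have := h2 (Sum.inr a); simpa [boxd] using this
    · have := h2 (Sum.inl a); simpa [boxd] using this
  · rintro ⟨h1, h2⟩
    refine ⟨h1, fun i => ?_⟩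
    rcases i with a | a
    · simpa [boxd] using (h2 a).2
    · simpa [boxd] using (h2 a).1

lemma cycle_conservation {G : Digraph' N α} {k : ℕ} {e : Fin (k+1) → α} {v : Fin (k+1) → N}
    (he : Function.Injective e) (hv : Function.Injective v) (x : α → ℝ)
    (hxs : ∀ b, b ∉ Set.range e → x b = 0)
    (hcyc : ∀ i, G.src (e i) = v i ∧ G.dst (e i) = v (i+1))
    (hxcirc : (incMat G).mulVec x = 0) :
    ∀ i, x (e (i+1)) = x (e i) := by
  intro i
  have h0 := congrFun hxcirc (v (i+1))
  rw [mulVec_eq_sum_range he hxs] at h0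
  have hterm : ∀ j, incMat G (v (i+1)) (e j) * x (e j)
      = (if v j = v (i+1) then x (e j) else 0) - (if v (j+1) = v (i+1) then x (e j) else 0) := by
    intro j
    rw [incMat_cycle_apply G (hcyc j).1 (hcyc j).2]
    by_cases h1 : v j = v (i+1) <;> by_cases h2 : v (j+1) = v (i+1) <;> simp [h1, h2] <;> ring
  rw [Finset.sum_congr rfl (fun j _ => hterm j), Finset.sum_sub_distrib] at h0
  have hA : (∑ j, if v j = v (i+1) then x (e j) else 0) = x (e (i+1)) := by
    rw [Finset.sum_eq_single (i+1)]
    · simp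
    · intro j _ hne
      have : v j ≠ v (i+1) := fun h => hne (hv h)
      simp [this]
    · simp
  have hB : (∑ j, if v (j+1) = v (i+1) then x (e j) else 0) = x (e i) := by
    rw [Finset.sum_eq_single i]
    · simp
    · intro j _ hne
      have : v (j+1) ≠ v (i+1) := fun h => hne (add_right_cancel (hv h))
      simp [this]
    · simp
  rw [hA, hB, Pi.zero_apply] at h0
  linarith

lemma circuit_main (G : Digraph' N α) (g : α → ℝ)
    (hc : IsCircuit (incMat G) (boxB α) g) :
    ‖g‖ = 1 ∧ (∑ a, g a) ≤ (Fintype.card N : ℝ) ∧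
      ((∑ a, g a) = (Fintype.card N : ℝ) →
        ∃ S : Finset α, S.card = Fintype.card N ∧ IsHamiltonianDicycle G ↑S ∧
          ∀ a, g a = if a ∈ S then 1 else 0) := by
  classical
  obtain ⟨k, e, v, he, hv, hsupp, hpm⟩ := circuit_structure G g hc
  have hpm1 : ∀ i, g (e i) = 1 ∨ g (e i) = -1 := fun i => by
    rcases hpm i with ⟨h,_,_⟩|⟨h,_,_⟩
    exacts [Or.inl h, Or.inr h]
  have hsum_range : (∑ a, g a) = ∑ i, g (e i) := by
    have h1 : (∑ a ∈ Finset.univ.image e, g a) = ∑ i, g (e i) :=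
      Finset.sum_image (fun i _ j _ h => he h)
    rw [← h1]
    refine (Finset.sum_subset (Finset.subset_univ _) ?_).symm
    intro a _ ha
    refine hsupp a fun ⟨i, hi⟩ => ha (Finset.mem_image.mpr ⟨i, Finset.mem_univ _, hi⟩)
  have hcard : k + 1 ≤ Fintype.card N := by
    have := Fintype.card_le_of_injective v hv
    simpa using this
  have hle1 : ∀ i, g (e i) ≤ 1 := fun i => by rcases hpm1 i with h|h <;> rw [h] <;> norm_num
  have hsum_le : (∑ a, g a) ≤ (Fintype.card N : ℝ) := by
    rw [hsum_range]
    calc (∑ i, g (e i)) ≤ ∑ _i : Fin (k+1), (1:ℝ) := Finset.sum_le_sum fun i _ => hle1 i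
    _ = (k+1 : ℝ) := by simp
    _ ≤ (Fintype.card N : ℝ) := by exact_mod_cast hcard
  have hnorm : ‖g‖ = 1 := by
    refine le_antisymm ((pi_norm_le_iff_of_nonneg one_pos.le).mpr fun b => ?_) ?_
    · by_cases hb : b ∈ Set.range e
      · obtain ⟨i, rfl⟩ := hb
        rcases hpm1 i with h|h <;> rw [Real.norm_eq_abs, h] <;> norm_num
      · rw [Real.norm_eq_abs, hsupp b hb]; norm_num
    · have h1 : ‖g (e 0)‖ = 1 := by
        rcases hpm1 0 with h|h <;> rw [Real.norm_eq_abs, h] <;> norm_num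
      calc (1:ℝ) = ‖g (e 0)‖ := h1.symm
      _ ≤ ‖g‖ := norm_le_pi_norm g (e 0)
  refine ⟨hnorm, hsum_le, fun heq => ?_⟩
  -- equality case
  have hzero : (∑ i : Fin (k+1), (1 - g (e i))) = (k+1 : ℝ) - Fintype.card N := by
    rw [Finset.sum_sub_distrib, ← hsum_range, heq]; simp
  have hnonneg : ∀ i ∈ Finset.univ, (0:ℝ) ≤ 1 - g (e i) := fun i _ => by linarith [hle1 i]
  have hsz : (∑ i : Fin (k+1), (1 - g (e i))) = 0 := by
    have h1 : (0:ℝ) ≤ ∑ i : Fin (k+1), (1 - g (e i)) := Finset.sum_nonneg hnonneg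
    have h2 : (∑ i : Fin (k+1), (1 - g (e i))) ≤ 0 := by
      rw [hzero]
      have : (k+1 : ℝ) ≤ (Fintype.card N : ℝ) := by exact_mod_cast hcard
      linarith
    linarith
  have hone : ∀ i, g (e i) = 1 := by
    intro i
    have := (Finset.sum_eq_zero_iff_of_nonneg hnonneg).mp hsz i (Finset.mem_univ _)
    linarith
  have hkN : k + 1 = Fintype.card N := by
    have : (k+1 : ℝ) - Fintype.card N = 0 := hzero ▸ hsz
    have : (k+1 : ℝ) = (Fintype.card N : ℝ) := by linarith
    exact_mod_cast this
  have hvbij : Function.Bijective v :=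
    (Fintype.bijective_iff_injective_and_card v).mpr ⟨hv, by simpa using hkN⟩
  refine ⟨Finset.univ.image e, ?_, ?_, ?_⟩
  · rw [Finset.card_image_of_injective _ he, Finset.card_univ]
    simpa using hkN
  · refine ⟨k, e, v, he, hvbij, ?_, ?_⟩
    · rw [Finset.coe_image, Finset.coe_univ, Set.image_univ]
    · intro i
      rcases hpm i with ⟨_,h1,h2⟩|⟨h,_,_⟩
      · exact ⟨h1, h2⟩
      · exfalso; rw [hone i] at h; norm_num at h
  · intro a
    by_cases ha : a ∈ Finset.univ.image e
    · obtain ⟨i, _, rfl⟩ := Finset.mem_image.mp ha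
      rw [if_pos ha]; exact hone i
    · rw [if_neg ha]
      refine hsupp a fun ⟨i, hi⟩ => ha (Finset.mem_image.mpr ⟨i, Finset.mem_univ _, hi⟩)

end Aux5
section Aux6
variable {N α : Type*} [Fintype N] [Fintype α] [DecidableEq N] [DecidableEq α]

lemma isCircuit_indicator (G : Digraph' N α) (S : Set α) (hS : IsHamiltonianDicycle G S) :
    IsCircuit (incMat G) (boxB α) (S.indicator 1) := by
  classical
  obtain ⟨k, e, v, he, hvbij, hSr, hcyc⟩ := hS
  set χ : α → ℝ := S.indicator 1 with hχ
  have hmem : ∀ i, χ (e i) = 1 := fun i => by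
    rw [hχ, Set.indicator_of_mem (by rw [hSr]; exact Set.mem_range_self i)]; rfl
  have hoff : ∀ b, b ∉ Set.range e → χ b = 0 := fun b hb => by
    rw [hχ, Set.indicator_of_notMem (by rw [hSr]; exact hb)]
  have hres : ResidCycle G χ e v := fun i =>
    Or.inl ⟨by rw [hmem i]; norm_num, (hcyc i).1, (hcyc i).2⟩
  have habs : ∀ i j, |χ (e i)| = |χ (e j)| := fun i j => by rw [hmem i, hmem j]
  refine ⟨resid_circulation he hoff hres habs, ?_, ?_, ?_⟩
  · intro h0
    have : χ (e 0) = 0 := by rw [h0]; rfl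
    rw [hmem 0] at this; norm_num at this
  · refine ⟨fun a => if a ∈ S then 1 else 0, fun a => ?_, ?_⟩
    · by_cases ha : a ∈ S
      · simp [ha, hχ, Set.indicator_of_mem ha]
      · simp [ha, hχ, Set.indicator_of_notMem ha]
    · have hd : Finset.univ.gcd (fun a => if a ∈ S then (1:ℤ) else 0) ∣ 1 := by
        have := Finset.gcd_dvd (f := fun a => if a ∈ S then (1:ℤ) else 0)
          (Finset.mem_univ (e 0))
        simpa [hSr, Set.mem_range_self] using this
      rcases Int.isUnit_iff.mp (isUnit_of_dvd_one hd) with h | h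
      · exact h
      · exfalso
        have hn := Finset.normalize_gcd (s := (Finset.univ : Finset α))
          (f := fun a => if a ∈ S then (1:ℤ) else 0)
        rw [h] at hn
        rw [show normalize (-1:ℤ) = 1 by decide] at hn
        norm_num at hn
  · intro x hxcirc hxne hss
    have hxs : ∀ b, b ∉ Set.range e → x b = 0 := by
      intro b hb
      by_contra hxb
      have hmemx : (Sum.inl b : α ⊕ α) ∈ Function.support ((boxB α).mulVec x) := by
        rw [boxB_mulVec]; simpa using hxb
      have := hss.1 hmemx
      rw [boxB_mulVec] at this
      simp only [Function.mem_support, Sum.elim_inl] at this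
      exact this (hoff b hb)
    obtain ⟨j, hj1, hj2⟩ := Set.exists_of_ssubset hss
    have hwit : ∃ m : Fin (k+1), x (e m) = 0 := by
      rw [boxB_mulVec] at hj1 hj2
      rcases j with a | a
      · simp only [Function.mem_support, Sum.elim_inl] at hj1 hj2
        push_neg at hj2
        have ha : a ∈ Set.range e := by
          by_contra hc; exact hj1 (hoff a hc)
        obtain ⟨m, rfl⟩ := ha
        exact ⟨m, hj2⟩
      · simp only [Function.mem_support, Sum.elim_inr, Pi.neg_apply, neg_ne_zero] at hj1 hj2
        push_neg at hj2
        have ha : a ∈ Set.range e := by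
          by_contra hc; exact hj1 (hoff a hc)
        obtain ⟨m, rfl⟩ := ha
        exact ⟨m, hj2⟩
    obtain ⟨m, hm⟩ := hwit
    have hconst := fin_cycle_const (fun i => x (e i))
      (cycle_conservation he hvbij.1 x hxs hcyc hxcirc)
    apply hxne
    funext b
    by_cases hb : b ∈ Set.range e
    · obtain ⟨i, rfl⟩ := hb
      have : x (e i) = x (e m) := hconst i m
      rw [this, hm]; rfl
    · rw [hxs b hb]; rfl

lemma card_arcs (G : Digraph' N α) (hdeg : ∀ v : N, inDeg G v = 2 ∧ outDeg G v = 2) :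
    Fintype.card α = 2 * Fintype.card N := by
  classical
  have h := Finset.card_eq_sum_card_fiberwise
    (f := G.src) (s := Finset.univ) (t := Finset.univ) (fun a _ => Finset.mem_univ _)
  rw [Finset.card_univ] at h
  rw [h]
  have : ∀ w : N, (Finset.univ.filter fun a => G.src a = w).card = 2 := fun w => (hdeg w).2
  rw [Finset.sum_congr rfl (fun w _ => this w)]
  rw [Finset.sum_const, Finset.card_univ, smul_eq_mul, mul_comm]

lemma fullflow_circ (G : Digraph' N α) (hdeg : ∀ v : N, inDeg G v = 2 ∧ outDeg G v = 2) :
    (incMat G).mulVec (1 : α → ℝ) = 0 := by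
  funext w
  rw [incMat_mulVec_apply]
  have h1 : (∑ a ∈ Finset.univ.filter fun a => G.src a = w, (1:α → ℝ) a) = 2 := by
    simp only [Pi.one_apply, Finset.sum_const, nsmul_eq_mul, mul_one]
    have h := (hdeg w).2
    unfold outDeg at h
    exact_mod_cast h
  have h2 : (∑ a ∈ Finset.univ.filter fun a => G.dst a = w, (1:α → ℝ) a) = 2 := by
    simp only [Pi.one_apply, Finset.sum_const, nsmul_eq_mul, mul_one]
    have h := (hdeg w).1
    unfold inDeg at h
    exact_mod_cast h
  rw [h1, h2]; simp

end Aux6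
section Aux7
variable {N α : Type*} [Fintype N] [Fintype α] [DecidableEq N] [DecidableEq α]

lemma walk_sum_norm (G : Digraph' N α) [Nonempty N]
    (hdeg : ∀ v : N, inDeg G v = 2 ∧ outDeg G v = 2) {r : ℕ}
    {g : Fin r → α → ℝ} {lam : Fin r → ℝ}
    (hw : IsCircuitWalk (incMat G) 0 (boxB α) (boxd α) (0 : α → ℝ) (1 : α → ℝ) r g lam) :
    (∑ i, ‖lam i • g i‖) = ∑ i, lam i ∧
    (∀ a, (∑ i, lam i * g i a) = 1) ∧
    (∑ i, lam i * (∑ a, g i a)) = 2 * (Fintype.card N : ℝ) ∧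
    2 ≤ ∑ i, lam i := by
  have hcir := hw.1
  have hlam := hw.2.1
  have hcm := fun i => circuit_main G (g i) (hcir i)
  have hnorm : ∀ i, ‖g i‖ = 1 := fun i => (hcm i).1
  have h1 : (∑ i, ‖lam i • g i‖) = ∑ i, lam i := by
    refine Finset.sum_congr rfl fun i _ => ?_
    rw [norm_smul, hnorm i, Real.norm_eq_abs, abs_of_pos (hlam i), mul_one]
  have hone : (0 : α → ℝ) + ∑ i, lam i • g i = 1 := hw.2.2.2.1
  have h2 : ∀ a, (∑ i, lam i * g i a) = 1 := by
    intro a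
    have := congrFun hone a
    simpa [Finset.sum_apply] using this
  have h3 : (∑ i, lam i * (∑ a, g i a)) = 2 * (Fintype.card N : ℝ) := by
    calc (∑ i, lam i * (∑ a, g i a)) = ∑ i, ∑ a, lam i * g i a := by
          refine Finset.sum_congr rfl fun i _ => ?_
          rw [Finset.mul_sum]
    _ = ∑ a, ∑ i, lam i * g i a := Finset.sum_comm
    _ = ∑ _a : α, (1:ℝ) := Finset.sum_congr rfl fun a _ => h2 a
    _ = (Fintype.card α : ℝ) := by simp
    _ = 2 * (Fintype.card N : ℝ) := by rw [card_arcs G hdeg]; push_cast; ring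
  have hc0 : 0 < (Fintype.card N : ℝ) := by exact_mod_cast Fintype.card_pos
  have h4 : 2 ≤ ∑ i, lam i := by
    have hle : (∑ i, lam i * (∑ a, g i a)) ≤ ∑ i, lam i * (Fintype.card N : ℝ) :=
      Finset.sum_le_sum fun i _ =>
        mul_le_mul_of_nonneg_left (hcm i).2.1 (hlam i).le
    rw [h3, ← Finset.sum_mul] at hle
    nlinarith
  exact ⟨h1, h2, h3, h4⟩

end Aux7
/-- For an Eulerian digraph `G` in which every node has in-degree `2` and
out-degree `2`: the minimum of `∑ ‖λᵢ gᵢ‖_∞` (the sup-norm on `ℝ^A`) over all circuit walks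
from the zero flow to the full flow of the 0/1-circulation polytope equals `2` if and only if
`G` decomposes into two simple Hamiltonian dicycles. -/
theorem supnorm_distance_two_iff_two_hamiltonian_dicycles
    {N α : Type*} [Fintype N] [Fintype α] [DecidableEq N] [DecidableEq α] [Nonempty N]
    (G : Digraph' N α)
    (hdeg : ∀ v : N, inDeg G v = 2 ∧ outDeg G v = 2) :
    IsLeast {s : ℝ | ∃ (r : ℕ) (g : Fin r → α → ℝ) (lam : Fin r → ℝ),
        IsCircuitWalk (incMat G) 0 (boxB α) (boxd α) (0 : α → ℝ) (1 : α → ℝ) r g lam ∧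
        s = ∑ i, ‖lam i • g i‖} 2
      ↔ DecompTwoHamiltonian G := by
  classical
  constructor
  · rintro ⟨⟨r, g, lam, hw, hs⟩, -⟩
    obtain ⟨hn1, hptw, hn2, hge⟩ := walk_sum_norm G hdeg hw
    have hlam := hw.2.1
    have hsl : (∑ i, lam i) = 2 := by rw [← hn1, ← hs]
    have hc1 : 1 ≤ Fintype.card N := Fintype.card_pos
    have hsum_each : ∀ i, (∑ a, g i a) = (Fintype.card N : ℝ) := by
      by_contra hcon
      push_neg at hcon
      obtain ⟨i₀, hi₀⟩ := hcon
      have hlt : (∑ a, g i₀ a) < (Fintype.card N : ℝ) :=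
        lt_of_le_of_ne ((circuit_main G (g i₀) (hw.1 i₀)).2.1) hi₀
      have hstrict : (∑ i, lam i * (∑ a, g i a)) < ∑ i, lam i * (Fintype.card N : ℝ) := by
        refine Finset.sum_lt_sum (fun i _ =>
          mul_le_mul_of_nonneg_left (circuit_main G (g i) (hw.1 i)).2.1 (hlam i).le)
          ⟨i₀, Finset.mem_univ _, mul_lt_mul_of_pos_left hlt (hlam i₀)⟩
      rw [hn2, ← Finset.sum_mul, hsl] at hstrict
      linarith
    have hham := fun i => (circuit_main G (g i) (hw.1 i)).2.2 (hsum_each i)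
    choose S hScard hSham hSval using hham
    have hα : 0 < Fintype.card α := by rw [card_arcs G hdeg]; omega
    have hr1 : 0 < r := by
      rcases Nat.eq_zero_or_pos r with h | h
      · exfalso
        subst h
        obtain ⟨a⟩ := Fintype.card_pos_iff.mp hα
        have := hptw a
        simp at this
      · exact h
    set i0 : Fin r := ⟨0, hr1⟩ with hi0def
    obtain ⟨a₀, ha₀⟩ : ∃ a, a ∈ S i0 := Finset.card_pos.mp (by rw [hScard]; omega)
    have hfil0 : Finset.univ.filter (fun i : Fin r => i ≤ i0) = {i0} := by
      ext i
      simp only [Finset.mem_filter, Finset.mem_univ, true_and, Finset.mem_singleton]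
      constructor
      · intro h
        exact Fin.ext (Nat.le_zero.mp h)
      · intro h
        exact le_of_eq h
    have hmem0 := hw.2.2.1 i0
    rw [hfil0, Finset.sum_singleton, zero_add] at hmem0
    have hga₀ : g i0 a₀ = 1 := by rw [hSval i0 a₀, if_pos ha₀]
    have hle1 : lam i0 ≤ 1 := by
      have hb := ((inPoly_iff G _).mp hmem0).2 a₀
      have := hb.2
      rw [Pi.smul_apply, smul_eq_mul, hga₀, mul_one] at this
      exact this
    have hge1 : 1 ≤ lam i0 := by
      by_contra hlt
      push_neg at hlt
      apply hw.2.2.2.2 i0 1 hlt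
      have hfil0' : Finset.univ.filter (fun i : Fin r => i < i0) = ∅ := by
        ext i
        simp [hi0def, Fin.lt_def]
      rw [hfil0']
      have hEq : ((0 : α → ℝ) + ∑ i ∈ (∅ : Finset (Fin r)), lam i • g i) + (1:ℝ) • g i0
          = g i0 := by simp
      rw [hEq]
      exact (inPoly_iff G _).mpr ⟨(hw.1 i0).1,
        fun a => by rw [hSval i0 a]; split_ifs <;> norm_num⟩
    have hlam0 : lam i0 = 1 := le_antisymm hle1 hge1
    have hdisj0 : ∀ a ∈ S i0, ∀ i, i ≠ i0 → a ∉ S i := by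
      intro a ha i hi hai
      have h2a := hptw a
      have hga : g i0 a = 1 := by rw [hSval i0 a, if_pos ha]
      have hsplit : lam i0 * g i0 a + ∑ j ∈ Finset.univ.erase i0, lam j * g j a = 1 := by
        rw [Finset.add_sum_erase Finset.univ (fun i => lam i * g i a) (Finset.mem_univ i0)]
        exact h2a
      have hzero : (∑ j ∈ Finset.univ.erase i0, lam j * g j a) = 0 := by
        have h10 : lam i0 * g i0 a = 1 := by rw [hga, hlam0, one_mul]
        rw [h10] at hsplit
        linarith
      have hnonneg : ∀ j ∈ Finset.univ.erase i0, 0 ≤ lam j * g j a := by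
        intro j _
        exact mul_nonneg (hlam j).le (by rw [hSval j a]; split_ifs <;> norm_num)
      have hz := (Finset.sum_eq_zero_iff_of_nonneg hnonneg).mp hzero i
        (Finset.mem_erase.mpr ⟨hi, Finset.mem_univ i⟩)
      have hgia : g i a = 1 := by rw [hSval i a, if_pos hai]
      rw [hgia, mul_one] at hz
      exact (hlam i).ne' hz
    have hr2 : 1 < r := by
      by_contra h
      push_neg at h
      have hreq : r = 1 := le_antisymm h hr1
      subst hreq
      have h01 : (∑ i : Fin 1, lam i) = lam i0 := by
        rw [Fin.sum_univ_one]
        congr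
      rw [h01, hlam0] at hsl
      norm_num at hsl
    set i1 : Fin r := ⟨1, hr2⟩ with hi1def
    have hne10 : i1 ≠ i0 := by simp [hi1def, hi0def, Fin.ext_iff]
    have hsub : S i1 ⊆ (S i0)ᶜ := by
      intro a ha
      rw [Finset.mem_compl]
      intro ha0
      exact hdisj0 a ha0 i1 hne10 ha
    have hSeq : S i1 = (S i0)ᶜ := by
      refine Finset.eq_of_subset_of_card_le hsub ?_
      rw [Finset.card_compl, hScard, hScard, card_arcs G hdeg]
      omega
    refine ⟨↑(S i0), ↑(S i1), hSham i0, hSham i1, ?_, ?_⟩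
    · rw [hSeq, Finset.coe_compl]
      exact disjoint_compl_right
    · rw [hSeq, Finset.coe_compl]
      exact Set.union_compl_self _
  · rintro ⟨S₁, S₂, h1, h2, hdisj, huniv⟩
    have hpart : ∀ a : α, (a ∈ S₁ ∧ a ∉ S₂) ∨ (a ∈ S₂ ∧ a ∉ S₁) := by
      intro a
      have hmem : a ∈ S₁ ∪ S₂ := huniv ▸ Set.mem_univ a
      rcases hmem with h | h
      · exact Or.inl ⟨h, fun h2' => (Set.disjoint_left.mp hdisj h) h2'⟩
      · exact Or.inr ⟨h, fun h1' => (Set.disjoint_left.mp hdisj h1') h⟩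
    have hc1 := isCircuit_indicator G S₁ h1
    have hc2 := isCircuit_indicator G S₂ h2
    set χ₁ : α → ℝ := S₁.indicator 1 with hχ₁
    set χ₂ : α → ℝ := S₂.indicator 1 with hχ₂
    have hval1 : ∀ a, χ₁ a = if a ∈ S₁ then 1 else 0 := fun a => by
      by_cases h : a ∈ S₁
      · rw [if_pos h, hχ₁, Set.indicator_of_mem h]; rfl
      · rw [if_neg h, hχ₁, Set.indicator_of_notMem h]
    have hval2 : ∀ a, χ₂ a = if a ∈ S₂ then 1 else 0 := fun a => by
      by_cases h : a ∈ S₂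
      · rw [if_pos h, hχ₂, Set.indicator_of_mem h]; rfl
      · rw [if_neg h, hχ₂, Set.indicator_of_notMem h]
    have hsum12 : χ₁ + χ₂ = 1 := by
      funext a
      rcases hpart a with ⟨hA, hB⟩ | ⟨hA, hB⟩
      · rw [Pi.add_apply, hval1 a, hval2 a, if_pos hA, if_neg hB]; norm_num
      · rw [Pi.add_apply, hval1 a, hval2 a, if_neg hB, if_pos hA]; norm_num
    obtain ⟨k1, e1, v1, -, -, hS1r, -⟩ := h1
    obtain ⟨k2, e2, v2, -, -, hS2r, -⟩ := h2
    have ha₁ : e1 0 ∈ S₁ := by rw [hS1r]; exact Set.mem_range_self 0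
    have ha₂ : e2 0 ∈ S₂ := by rw [hS2r]; exact Set.mem_range_self 0
    have ha₂1 : e2 0 ∉ S₁ := fun h => (Set.disjoint_left.mp hdisj h) ha₂
    constructor
    · refine ⟨2, ![χ₁, χ₂], ![1, 1], ⟨?_, ?_, ?_, ?_, ?_⟩, ?_⟩
      · intro i
        fin_cases i
        · simpa using hc1
        · simpa using hc2
      · intro i
        fin_cases i <;> norm_num
      · intro k
        fin_cases k
        · have hfil : Finset.univ.filter (fun i : Fin 2 => i ≤ (0 : Fin 2)) = {0} := by decide
          beta_reduce
          simp only [Fin.zero_eta, Fin.mk_one]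
          rw [hfil, Finset.sum_singleton]
          have hEq : (0 : α → ℝ) + (![ (1:ℝ), 1] 0) • (![χ₁, χ₂] 0) = χ₁ := by
            simp
          rw [hEq]
          exact (inPoly_iff G _).mpr ⟨hc1.1,
            fun a => by rw [hval1 a]; split_ifs <;> norm_num⟩
        · have hfil : Finset.univ.filter (fun i : Fin 2 => i ≤ (1 : Fin 2)) = Finset.univ := by
            decide
          beta_reduce
          simp only [Fin.zero_eta, Fin.mk_one]
          rw [hfil, Fin.sum_univ_two]
          have hEq : (0 : α → ℝ) + ((![ (1:ℝ), 1] 0) • (![χ₁, χ₂] 0)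
              + (![ (1:ℝ), 1] 1) • (![χ₁, χ₂] 1)) = 1 := by
            simp [hsum12]
          rw [hEq]
          exact (inPoly_iff G _).mpr ⟨fullflow_circ G hdeg, fun a => by norm_num⟩
      · rw [Fin.sum_univ_two]
        simp [hsum12]
      · intro k mu hmu
        fin_cases k
        · have hfil : Finset.univ.filter (fun i : Fin 2 => i < (0 : Fin 2)) = ∅ := by decide
          beta_reduce
          simp only [Fin.zero_eta, Fin.mk_one]
          rw [hfil]
          intro hpoly
          have hb := ((inPoly_iff G _).mp hpoly).2 (e1 0)
          have hv : (((0 : α → ℝ) + ∑ i ∈ (∅ : Finset (Fin 2)), (![ (1:ℝ), 1] i) • (![χ₁, χ₂] i))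
              + mu • (![χ₁, χ₂] 0)) (e1 0) = mu := by
            simp [hval1 (e1 0), ha₁]
          rw [hv] at hb
          simp at hmu
          linarith [hb.2]
        · have hfil : Finset.univ.filter (fun i : Fin 2 => i < (1 : Fin 2)) = {0} := by decide
          beta_reduce
          simp only [Fin.zero_eta, Fin.mk_one]
          rw [hfil, Finset.sum_singleton]
          intro hpoly
          have hb := ((inPoly_iff G _).mp hpoly).2 (e2 0)
          have hv : (((0 : α → ℝ) + (![ (1:ℝ), 1] 0) • (![χ₁, χ₂] 0))
              + mu • (![χ₁, χ₂] 1)) (e2 0) = mu := by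
            simp [hval1 (e2 0), hval2 (e2 0), ha₂, ha₂1]
          rw [hv] at hb
          simp at hmu
          linarith [hb.2]
      · rw [Fin.sum_univ_two]
        have hn1 : ‖χ₁‖ = 1 := (circuit_main G χ₁ hc1).1
        have hn2 : ‖χ₂‖ = 1 := (circuit_main G χ₂ hc2).1
        simp [hn1, hn2]
        norm_num
    · rintro s ⟨r, g, lam, hw, rfl⟩
      have h := walk_sum_norm G hdeg hw
      rw [h.1]
      exact h.2.2.2
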